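/- Assume y₀ ≠ 0 and hypotheses (EC), (BB), (ET). Then T_{M_T} = T for every T > 0 and M_{T_M} = M for every M > 0; consequently the map T ↦ M_T is the inverse of the map M ↦ T_M. -/

import Mathlib

open MeasureTheory Set Filter Topology

noncomputable section

variable {H : Type*} [NormedAddCommGroup H] [InnerProductSpace ℂ H] [CompleteSpace H]
  [SecondCountableTopology H]

/-- `U` is a strongly continuous one-parameter group of unitary operators on `H`,
abstracting the Schrödinger group `e^{-iΔt}`. -/
def IsUnitaryGroup (U : ℝ → H →L[ℂ] H) : Prop :=
  U 0 = ContinuousLinearMap.id ℂ H ∧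
  (∀ s t : ℝ, U (s + t) = (U s).comp (U t)) ∧
  (∀ (t : ℝ) (x : H), ‖U t x‖ = ‖x‖) ∧
  ∀ x : H, Continuous fun t : ℝ => U t x

/-- `B` is a nonzero orthogonal projection on `H`, abstracting multiplication by `χ_ω`. -/
def IsOrthProj (B : H →L[ℂ] H) : Prop :=
  B ≠ 0 ∧ B.comp B = B ∧ ∀ x y : H, (inner ℂ (B x) y : ℂ) = inner ℂ x (B y)

/-- Membership in `L∞((a,b);H)`. -/
def MemLinfty (u : ℝ → H) (a b : ℝ) : Prop :=
  AEStronglyMeasurable u (volume : Measure ℝ) ∧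
    ∃ c : ℝ, ∀ᵐ t : ℝ ∂volume, t ∈ Ioo a b → ‖u t‖ ≤ c

/-- Membership in `L∞((0,∞);H)`. -/
def MemLinftyInf (u : ℝ → H) : Prop :=
  AEStronglyMeasurable u (volume : Measure ℝ) ∧
    ∃ c : ℝ, ∀ᵐ t : ℝ ∂volume, t ∈ Ioi (0 : ℝ) → ‖u t‖ ≤ c

/-- The `L∞((a,b);H)` norm of `u`. -/
def supNorm (u : ℝ → H) (a b : ℝ) : ℝ :=
  sInf {c : ℝ | 0 ≤ c ∧ ∀ᵐ t : ℝ ∂volume, t ∈ Ioo a b → ‖u t‖ ≤ c}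

/-- `stateT U B T τ u y₀ = y(T; χ_{(τ,T)}u, y₀)`, the mild solution at time `T` of the
controlled Schrödinger equation with initial state `y₀`, the control acting on `(τ,T)`:
`y(T) = U(T)y₀ + ∫_τ^T U(T-s) B u(s) ds`.  The free state at time `t` starting from `y₀`
with control `u` active from time `0` is `stateT U B t 0 u y₀`. -/
def stateT (U : ℝ → H →L[ℂ] H) (B : H →L[ℂ] H) (T τ : ℝ) (u : ℝ → H) (y₀ : H) : H :=
  U T y₀ + ∫ s in Ioo τ T, U (T - s) (B (u s))

/-- Hypothesis (EC): `L∞`-exact controllability with cost. -/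
def EC (U : ℝ → H →L[ℂ] H) (B : H →L[ℂ] H) : Prop :=
  ∀ τ : ℝ, 0 < τ → ∃ C : ℝ, 0 < C ∧ ∀ y₀ z : H, ∃ u : ℝ → H,
    AEStronglyMeasurable u (volume : Measure ℝ) ∧
    (∀ᵐ t : ℝ ∂volume, t ∈ Ioo 0 τ → ‖u t‖ ≤ C * ‖z - U τ y₀‖) ∧
    stateT U B τ 0 u y₀ = z

/-- Hypothesis (UC): unique continuation. -/
def UC (U : ℝ → H →L[ℂ] H) (B : H →L[ℂ] H) : Prop :=
  ∀ η : H, η ≠ 0 → volume {t : ℝ | B (U t η) = 0} = 0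

/-- The admissible set `U_M` of the minimal time problem `(TOCP)_M`. -/
def UMset (U : ℝ → H →L[ℂ] H) (B : H →L[ℂ] H) (y₀ : H) (M : ℝ) : Set (ℝ → H) :=
  {u | MemLinftyInf u ∧ (∀ᵐ t : ℝ ∂volume, t ∈ Ioi (0 : ℝ) → ‖u t‖ ≤ M) ∧
    ∃ s : ℝ, 0 < s ∧ stateT U B s 0 u y₀ = 0}

/-- The minimal time `T_M` of `(TOCP)_M`. -/
def Tmin (U : ℝ → H →L[ℂ] H) (B : H →L[ℂ] H) (y₀ : H) (M : ℝ) : ℝ :=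
  sInf {s : ℝ | 0 < s ∧ ∃ u ∈ UMset U B y₀ M, stateT U B s 0 u y₀ = 0}

/-- The admissible set `V_T` of the minimal norm problem `(NOCP)_T`. -/
def VTset (U : ℝ → H →L[ℂ] H) (B : H →L[ℂ] H) (y₀ : H) (T : ℝ) : Set (ℝ → H) :=
  {v | MemLinfty v 0 T ∧ stateT U B T 0 v y₀ = 0}

/-- The minimal norm `M_T` of `(NOCP)_T`. -/
def Mmin (U : ℝ → H →L[ℂ] H) (B : H →L[ℂ] H) (y₀ : H) (T : ℝ) : ℝ :=
  sInf ((fun v : ℝ → H => supNorm v 0 T) '' VTset U B y₀ T)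

/-- Hypothesis (BB): bang-bang property of the minimal time problems. -/
def BB (U : ℝ → H →L[ℂ] H) (B : H →L[ℂ] H) : Prop :=
  ∀ y₀ : H, y₀ ≠ 0 → ∀ M : ℝ, 0 < M → ∀ u ∈ UMset U B y₀ M,
    stateT U B (Tmin U B y₀ M) 0 u y₀ = 0 →
    ∀ᵐ t : ℝ ∂volume, t ∈ Ioo 0 (Tmin U B y₀ M) → ‖u t‖ = M

/-- Hypothesis (ET): existence of optimal controls for the minimal time problems. -/
def ET (U : ℝ → H →L[ℂ] H) (B : H →L[ℂ] H) : Prop :=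
  ∀ y₀ : H, y₀ ≠ 0 → ∀ M : ℝ, 0 < M →
    ∃ u ∈ UMset U B y₀ M, stateT U B (Tmin U B y₀ M) 0 u y₀ = 0

/-- The admissible set `U_{M,τ}`. -/
def UadmSet (M τ T : ℝ) : Set (ℝ → H) :=
  {u | MemLinfty u 0 T ∧ ∀ᵐ t : ℝ ∂volume, t ∈ Ioo τ T → ‖u t‖ ≤ M}

/-- The optimal distance `r(M,τ)` of the optimal target problem `(OP)^{M,τ}`. -/
def rOP (U : ℝ → H →L[ℂ] H) (B : H →L[ℂ] H) (y₀ z_d : H) (T M τ : ℝ) : ℝ :=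
  sInf ((fun u : ℝ → H => ‖stateT U B T τ u y₀ - z_d‖) '' UadmSet M τ T)

/-- `u` is an optimal control to `(OP)^{M,τ}`. -/
def IsOptOP (U : ℝ → H →L[ℂ] H) (B : H →L[ℂ] H) (y₀ z_d : H) (T M τ : ℝ) (u : ℝ → H) :
    Prop :=
  u ∈ UadmSet M τ T ∧ ‖stateT U B T τ u y₀ - z_d‖ = rOP U B y₀ z_d T M τ

/-- `M^τ`, the minimal norm for exact steering to the target `z_d`. -/
def Mtau (U : ℝ → H →L[ℂ] H) (B : H →L[ℂ] H) (y₀ z_d : H) (T τ : ℝ) : ℝ :=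
  sInf ((fun u : ℝ → H => supNorm u τ T) ''
    {u : ℝ → H | MemLinfty u 0 T ∧ stateT U B T τ u y₀ = z_d})

/-- The admissible set `W_{τ,r}` of the optimal norm problem `(NP)^{τ,r}`. -/
def WadmSet (U : ℝ → H →L[ℂ] H) (B : H →L[ℂ] H) (y₀ z_d : H) (T τ r : ℝ) :
    Set (ℝ → H) :=
  {u | MemLinfty u 0 T ∧ ‖stateT U B T τ u y₀ - z_d‖ ≤ r}

/-- The optimal norm `M(τ,r)` of `(NP)^{τ,r}`. -/
def MNP (U : ℝ → H →L[ℂ] H) (B : H →L[ℂ] H) (y₀ z_d : H) (T τ r : ℝ) : ℝ :=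
  sInf ((fun u : ℝ → H => supNorm u τ T) '' WadmSet U B y₀ z_d T τ r)

/-- `u` is an optimal control to `(NP)^{τ,r}`. -/
def IsOptNP (U : ℝ → H →L[ℂ] H) (B : H →L[ℂ] H) (y₀ z_d : H) (T τ r : ℝ) (u : ℝ → H) :
    Prop :=
  u ∈ WadmSet U B y₀ z_d T τ r ∧ supNorm u τ T = MNP U B y₀ z_d T τ r

/-- The admissible set `V_{M,r}` of the second type optimal time problem `(TP)^{M,r}`. -/
def VadmSet (U : ℝ → H →L[ℂ] H) (B : H →L[ℂ] H) (y₀ z_d : H) (T M r : ℝ) :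
    Set (ℝ → H) :=
  {u | ∃ τ : ℝ, τ ∈ Ico (0 : ℝ) T ∧ u ∈ UadmSet M τ T ∧
    ‖stateT U B T τ u y₀ - z_d‖ ≤ r}

/-- `τ_{M,r}(u)`. -/
def tauOf (U : ℝ → H →L[ℂ] H) (B : H →L[ℂ] H) (y₀ z_d : H) (T r : ℝ) (u : ℝ → H) : ℝ :=
  sSup {τ : ℝ | τ ∈ Ico (0 : ℝ) T ∧ ‖stateT U B T τ u y₀ - z_d‖ ≤ r}

/-- The optimal time `τ(M,r)` of `(TP)^{M,r}`. -/
def tauTP (U : ℝ → H →L[ℂ] H) (B : H →L[ℂ] H) (y₀ z_d : H) (T M r : ℝ) : ℝ :=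
  sSup (tauOf U B y₀ z_d T r '' VadmSet U B y₀ z_d T M r)

/-- `u` is an optimal control to `(TP)^{M,r}`. -/
def IsOptTP (U : ℝ → H →L[ℂ] H) (B : H →L[ℂ] H) (y₀ z_d : H) (T M r : ℝ) (u : ℝ → H) :
    Prop :=
  u ∈ VadmSet U B y₀ z_d T M r ∧
    ‖stateT U B T (tauTP U B y₀ z_d T M r) u y₀ - z_d‖ ≤ r

/-- The adjoint state `φ*(t) = U(t-T)(z_d - y(T; χ_{(τ,T)}u, y₀))`. -/
def adjState (U : ℝ → H →L[ℂ] H) (B : H →L[ℂ] H) (y₀ z_d : H) (T τ : ℝ) (u : ℝ → H)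
    (t : ℝ) : H :=
  U (t - T) (z_d - stateT U B T τ u y₀)


section Helpers

variable {U : ℝ → H →L[ℂ] H} {B : H →L[ℂ] H}

lemma IsUnitaryGroup.norm_apply (hU : IsUnitaryGroup U) (t : ℝ) (x : H) : ‖U t x‖ = ‖x‖ :=
  hU.2.2.1 t x

lemma IsUnitaryGroup.add_apply (hU : IsUnitaryGroup U) (a b : ℝ) (x : H) :
    U a (U b x) = U (a + b) x := by
  rw [hU.2.1 a b]; rfl

lemma IsUnitaryGroup.continuous_uncurry (hU : IsUnitaryGroup U) :
    Continuous (fun p : ℝ × H => U p.1 p.2) := by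
  rw [continuous_iff_continuousAt]
  rintro ⟨t₀, x₀⟩
  have h1 : Tendsto (fun p : ℝ × H => U p.1 (p.2 - x₀)) (𝓝 (t₀, x₀)) (𝓝 0) := by
    have hg : Tendsto (fun p : ℝ × H => ‖p.2 - x₀‖) (𝓝 (t₀, x₀)) (𝓝 0) := by
      have h := ((continuous_snd.sub (continuous_const (y := x₀))).norm).continuousAt
        (x := ((t₀, x₀) : ℝ × H))
      rw [ContinuousAt] at h
      simpa using h
    exact squeeze_zero_norm (fun p => le_of_eq (hU.norm_apply _ _)) hg
  have h2 : Tendsto (fun p : ℝ × H => U p.1 x₀) (𝓝 (t₀, x₀)) (𝓝 (U t₀ x₀)) :=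
    ((hU.2.2.2 x₀).comp continuous_fst).continuousAt
  have h3 := h1.add h2
  have hkey : ∀ p : ℝ × H, U p.1 (p.2 - x₀) + U p.1 x₀ = U p.1 p.2 := by
    intro p; rw [map_sub]; abel
  simp only [hkey, zero_add] at h3
  exact h3

lemma aesm_integrand (hU : IsUnitaryGroup U) {u : ℝ → H}
    (hu : AEStronglyMeasurable u (volume : Measure ℝ)) (a : ℝ) :
    AEStronglyMeasurable (fun s : ℝ => U (a - s) (B (u s))) (volume : Measure ℝ) := by
  have h1 : AEStronglyMeasurable (fun s : ℝ => ((a - s : ℝ), B (u s))) (volume : Measure ℝ) :=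
    (Continuous.aestronglyMeasurable (by continuity)).prodMk
      (B.continuous.comp_aestronglyMeasurable hu)
  exact hU.continuous_uncurry.comp_aestronglyMeasurable h1

lemma integrableOn_integrand (hU : IsUnitaryGroup U) {u : ℝ → H}
    (hu : AEStronglyMeasurable u (volume : Measure ℝ)) {a b c : ℝ}
    (hbd : ∀ᵐ t : ℝ ∂volume, t ∈ Ioo a b → ‖u t‖ ≤ c) (τ : ℝ) :
    IntegrableOn (fun s => U (τ - s) (B (u s))) (Ioo a b) (volume : Measure ℝ) := by
  have hb : ∀ᵐ t ∂(volume.restrict (Ioo a b)), ‖U (τ - t) (B (u t))‖ ≤ ‖B‖ * c := by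
    rw [ae_restrict_iff' measurableSet_Ioo]
    filter_upwards [hbd] with t ht hmem
    rw [hU.norm_apply]
    calc ‖B (u t)‖ ≤ ‖B‖ * ‖u t‖ := B.le_opNorm _
    _ ≤ ‖B‖ * c := mul_le_mul_of_nonneg_left (ht hmem) (norm_nonneg B)
  exact Integrable.mono' (integrableOn_const measure_Ioo_lt_top.ne)
    ((aesm_integrand hU hu τ).restrict) hb

lemma norm_setIntegral_le_aux (hU : IsUnitaryGroup U) {u : ℝ → H}
    (hu : AEStronglyMeasurable u (volume : Measure ℝ)) {a b c : ℝ} (hab : a ≤ b)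
    (hbd : ∀ᵐ t : ℝ ∂volume, t ∈ Ioo a b → ‖u t‖ ≤ c) (τ : ℝ) :
    ‖∫ s in Ioo a b, U (τ - s) (B (u s))‖ ≤ (b - a) * (‖B‖ * c) := by
  have hb : ∀ᵐ t ∂(volume.restrict (Ioo a b)), ‖U (τ - t) (B (u t))‖ ≤ ‖B‖ * c := by
    rw [ae_restrict_iff' measurableSet_Ioo]
    filter_upwards [hbd] with t ht hmem
    rw [hU.norm_apply]
    calc ‖B (u t)‖ ≤ ‖B‖ * ‖u t‖ := B.le_opNorm _
    _ ≤ ‖B‖ * c := mul_le_mul_of_nonneg_left (ht hmem) (norm_nonneg B)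
  calc ‖∫ s in Ioo a b, U (τ - s) (B (u s))‖ ≤ ∫ _ in Ioo a b, (‖B‖ * c) :=
        norm_integral_le_of_norm_le (integrableOn_const measure_Ioo_lt_top.ne) hb
  _ = (b - a) * (‖B‖ * c) := by
      rw [setIntegral_const, Real.volume_real_Ioo_of_le hab, smul_eq_mul]

lemma norm_y0_le (hU : IsUnitaryGroup U) {u : ℝ → H} {y₀ : H} {s c : ℝ} (hs : 0 < s)
    (hu : AEStronglyMeasurable u (volume : Measure ℝ))
    (hbd : ∀ᵐ t : ℝ ∂volume, t ∈ Ioo 0 s → ‖u t‖ ≤ c)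
    (hst : stateT U B s 0 u y₀ = 0) : ‖y₀‖ ≤ s * (‖B‖ * c) := by
  have h0 : ∫ t in Ioo 0 s, U (s - t) (B (u t)) = -(U s y₀) :=
    eq_neg_of_add_eq_zero_right hst
  have h1 := norm_setIntegral_le_aux (B := B) hU hu hs.le hbd s
  rw [h0, norm_neg, hU.norm_apply] at h1
  simpa using h1

lemma supNorm_nonneg (u : ℝ → H) (a b : ℝ) : 0 ≤ supNorm u a b := by
  unfold supNorm
  rcases eq_empty_or_nonempty {c : ℝ | 0 ≤ c ∧ ∀ᵐ t : ℝ ∂volume, t ∈ Ioo a b → ‖u t‖ ≤ c}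
    with h | h
  · rw [h, Real.sInf_empty]
  · exact le_csInf h fun c hc => hc.1

lemma supNorm_le {u : ℝ → H} {a b c : ℝ} (hc : 0 ≤ c)
    (hbd : ∀ᵐ t : ℝ ∂volume, t ∈ Ioo a b → ‖u t‖ ≤ c) : supNorm u a b ≤ c :=
  csInf_le ⟨0, fun _ hx => hx.1⟩ ⟨hc, hbd⟩

lemma ae_le_supNorm {u : ℝ → H} {a b : ℝ} (h : MemLinfty u a b) :
    ∀ᵐ t : ℝ ∂volume, t ∈ Ioo a b → ‖u t‖ ≤ supNorm u a b := by
  obtain ⟨-, c, hc⟩ := h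
  have hS : {c : ℝ | 0 ≤ c ∧ ∀ᵐ t : ℝ ∂volume, t ∈ Ioo a b → ‖u t‖ ≤ c}.Nonempty :=
    ⟨max c 0, le_max_right _ _, by
      filter_upwards [hc] with t ht hm
      exact (ht hm).trans (le_max_left _ _)⟩
  have key : ∀ n : ℕ, ∃ cn ∈ {c : ℝ | 0 ≤ c ∧ ∀ᵐ t : ℝ ∂volume, t ∈ Ioo a b → ‖u t‖ ≤ c},
      cn < supNorm u a b + 1 / (n + 1) := fun n =>
    exists_lt_of_csInf_lt hS (lt_add_of_pos_right _ (by positivity))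
  choose cs hcs hlt using key
  have hae : ∀ᵐ t : ℝ ∂volume, ∀ n : ℕ, t ∈ Ioo a b → ‖u t‖ ≤ cs n :=
    ae_all_iff.2 fun n => (hcs n).2
  filter_upwards [hae] with t ht hm
  refine le_of_forall_pos_le_add fun ε hε => ?_
  obtain ⟨n, hn⟩ := exists_nat_one_div_lt hε
  exact (ht n hm).trans ((hlt n).le.trans (by linarith))

lemma bddBelow_supNorm_image (S : Set (ℝ → H)) (a b : ℝ) :
    BddBelow ((fun v : ℝ → H => supNorm v a b) '' S) :=
  ⟨0, by rintro x ⟨v, -, rfl⟩; exact supNorm_nonneg v a b⟩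

lemma state_split (hU : IsUnitaryGroup U) {u : ℝ → H}
    (hu : AEStronglyMeasurable u (volume : Measure ℝ)) {T τ : ℝ} (h0 : 0 < τ) (hτT : τ < T)
    (hint : IntegrableOn (fun s => U (T - s) (B (u s))) (Ioo 0 T) (volume : Measure ℝ))
    (y₀ : H) :
    stateT U B T 0 u y₀ =
      U (T - τ) (stateT U B τ 0 u y₀) + ∫ s in Ioo τ T, U (T - s) (B (u s)) := by
  have hint1 : IntegrableOn (fun s => U (T - s) (B (u s))) (Ioo 0 τ) volume :=
    hint.mono_set (Ioo_subset_Ioo le_rfl hτT.le)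
  have hint2 : IntegrableOn (fun s => U (T - s) (B (u s))) (Ioo τ T) volume :=
    hint.mono_set (Ioo_subset_Ioo h0.le le_rfl)
  have hintτ : IntegrableOn (fun s => U (τ - s) (B (u s))) (Ioo 0 τ) volume := by
    have heq : (fun s : ℝ => U (τ - s) (B (u s)))
        = fun s => U (τ - T) (U (T - s) (B (u s))) := by
      funext s; rw [hU.add_apply]; congr 1; ring
    rw [heq]
    exact (U (τ - T)).integrable_comp hint1
  have hsplit : ∫ s in Ioo 0 T, U (T - s) (B (u s)) =
      (∫ s in Ioo 0 τ, U (T - s) (B (u s))) + ∫ s in Ioo τ T, U (T - s) (B (u s)) := by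
    have e1 : ∫ s in Ioo 0 T, U (T - s) (B (u s)) = ∫ s in Ioc 0 T, U (T - s) (B (u s)) :=
      (integral_Ioc_eq_integral_Ioo).symm
    have e2 : ∫ s in Ioc 0 T, U (T - s) (B (u s)) =
        (∫ s in Ioc 0 τ, U (T - s) (B (u s))) + ∫ s in Ioc τ T, U (T - s) (B (u s)) := by
      rw [← Ioc_union_Ioc_eq_Ioc h0.le hτT.le,
        setIntegral_union (Ioc_disjoint_Ioc_of_le le_rfl) measurableSet_Ioc
          ((integrableOn_Ioc_iff_integrableOn_Ioo' (by simp)).2 hint1)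
          ((integrableOn_Ioc_iff_integrableOn_Ioo' (by simp)).2 hint2)]
    rw [e1, e2, integral_Ioc_eq_integral_Ioo, integral_Ioc_eq_integral_Ioo]
  have hmap : U (T - τ) (∫ s in Ioo 0 τ, U (τ - s) (B (u s)))
      = ∫ s in Ioo 0 τ, U (T - s) (B (u s)) := by
    rw [← ContinuousLinearMap.integral_comp_comm _ hintτ]
    refine setIntegral_congr_fun measurableSet_Ioo fun s _ => ?_
    rw [hU.add_apply]; congr 1; ring
  unfold stateT
  rw [map_add, hmap, hsplit, hU.add_apply, show T - τ + τ = T by ring]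
  abel

lemma integral_shift (g : ℝ → H) (τ δ : ℝ) :
    (∫ s in Ioo τ (τ + δ), g (s - τ)) = ∫ r in Ioo 0 δ, g r := by
  rw [← integral_indicator measurableSet_Ioo, ← integral_indicator measurableSet_Ioo]
  have h : ∀ s : ℝ, (Ioo τ (τ + δ)).indicator (fun s => g (s - τ)) s
      = (Ioo 0 δ).indicator g (s - τ) := by
    intro s
    by_cases hs : s ∈ Ioo τ (τ + δ)
    · obtain ⟨h1, h2⟩ := mem_Ioo.1 hs
      rw [indicator_of_mem hs, indicator_of_mem (mem_Ioo.2 ⟨by linarith, by linarith⟩)]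
    · rw [indicator_of_notMem hs, indicator_of_notMem (fun hc => hs
        (mem_Ioo.2 ⟨by linarith [(mem_Ioo.1 hc).1], by linarith [(mem_Ioo.1 hc).2]⟩))]
  simp_rw [h]
  exact integral_sub_right_eq_self (fun s => (Ioo 0 δ).indicator g s) τ

lemma integral_shift' (g : ℝ → H) {τ b δ : ℝ} (h : b = τ + δ) :
    (∫ s in Ioo τ b, g (s - τ)) = ∫ r in Ioo 0 δ, g r := by
  subst h; exact integral_shift g τ δ

lemma ae_comp_sub {P : ℝ → Prop} (h : ∀ᵐ r : ℝ ∂volume, P r) (τ : ℝ) :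
    ∀ᵐ t : ℝ ∂volume, P (t - τ) := by
  have hq := (measurePreserving_sub_right (volume : Measure ℝ) τ).quasiMeasurePreserving
  rw [ae_iff] at h ⊢
  exact hq.preimage_null h

lemma VTset_nonempty (hEC : EC U B) (y₀ : H) {T : ℝ} (hT : 0 < T) :
    (VTset U B y₀ T).Nonempty := by
  obtain ⟨C, hC, h⟩ := hEC T hT
  obtain ⟨u, hmeas, hbd, hstate⟩ := h y₀ 0
  exact ⟨u, ⟨hmeas, C * ‖(0 : H) - U T y₀‖, hbd⟩, hstate⟩

lemma Mmin_pos (hU : IsUnitaryGroup U) (hB : IsOrthProj B) (hEC : EC U B) {y₀ : H}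
    (hy₀ : y₀ ≠ 0) {T : ℝ} (hT : 0 < T) : 0 < Mmin U B y₀ T := by
  have hBpos : (0:ℝ) < ‖B‖ := norm_pos_iff.2 hB.1
  have hy₀n : (0:ℝ) < ‖y₀‖ := norm_pos_iff.2 hy₀
  have hne := (VTset_nonempty hEC y₀ hT).image (fun v : ℝ → H => supNorm v 0 T)
  have hlb : ∀ m ∈ (fun v : ℝ → H => supNorm v 0 T) '' VTset U B y₀ T,
      ‖y₀‖ / (T * ‖B‖) ≤ m := by
    rintro m ⟨v, hv, rfl⟩
    have hy := norm_y0_le hU hT hv.1.1 (ae_le_supNorm hv.1) hv.2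
    rw [div_le_iff₀ (by positivity)]
    calc ‖y₀‖ ≤ T * (‖B‖ * supNorm v 0 T) := hy
    _ = supNorm v 0 T * (T * ‖B‖) := by ring
  have hfin : ‖y₀‖ / (T * ‖B‖) ≤ Mmin U B y₀ T := le_csInf hne hlb
  exact lt_of_lt_of_le (by positivity) hfin

lemma Tmin_pos (hU : IsUnitaryGroup U) (hB : IsOrthProj B) (hET : ET U B) {y₀ : H}
    (hy₀ : y₀ ≠ 0) {M : ℝ} (hM : 0 < M) : 0 < Tmin U B y₀ M := by
  have hBpos : (0:ℝ) < ‖B‖ := norm_pos_iff.2 hB.1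
  have hy₀n : (0:ℝ) < ‖y₀‖ := norm_pos_iff.2 hy₀
  obtain ⟨u, huU, hustate⟩ := hET y₀ hy₀ M hM
  obtain ⟨s₀, hs₀, hs₀state⟩ := huU.2.2
  have hne : Set.Nonempty {s : ℝ | 0 < s ∧ ∃ u ∈ UMset U B y₀ M, stateT U B s 0 u y₀ = 0} :=
    ⟨s₀, hs₀, u, huU, hs₀state⟩
  have hlb : ∀ s ∈ {s : ℝ | 0 < s ∧ ∃ u ∈ UMset U B y₀ M, stateT U B s 0 u y₀ = 0},
      ‖y₀‖ / (‖B‖ * M) ≤ s := by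
    rintro s ⟨hs, u', hu', hstate'⟩
    have hbd : ∀ᵐ t : ℝ ∂volume, t ∈ Ioo 0 s → ‖u' t‖ ≤ M := by
      filter_upwards [hu'.2.1] with t ht hm
      exact ht hm.1
    have hy := norm_y0_le hU hs hu'.1.1 hbd hstate'
    rw [div_le_iff₀ (by positivity)]
    calc ‖y₀‖ ≤ s * (‖B‖ * M) := hy
    _ = s * (‖B‖ * M) := rfl
  have hfin : ‖y₀‖ / (‖B‖ * M) ≤ Tmin U B y₀ M := le_csInf hne hlb
  exact lt_of_lt_of_le (by positivity) hfin

set_option maxHeartbeats 800000 in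
lemma Mmin_Tmin_eq (hU : IsUnitaryGroup U) (hB : IsOrthProj B) (hEC : EC U B) (hBB : BB U B)
    (hET : ET U B) {y₀ : H} (hy₀ : y₀ ≠ 0) {M : ℝ} (hM : 0 < M) :
    Mmin U B y₀ (Tmin U B y₀ M) = M := by
  obtain ⟨u, huU, hustate⟩ := hET y₀ hy₀ M hM
  obtain ⟨⟨hu_aesm, cu, hcu⟩, huM, hus⟩ := huU
  have hT : 0 < Tmin U B y₀ M := Tmin_pos hU hB hET hy₀ hM
  set Tm := Tmin U B y₀ M with hTm
  have hle : Mmin U B y₀ Tm ≤ M := by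
    have hmem : u ∈ VTset U B y₀ Tm :=
      ⟨⟨hu_aesm, cu, by filter_upwards [hcu] with t ht hm; exact ht hm.1⟩, hustate⟩
    have h1 : supNorm u 0 Tm ≤ M :=
      supNorm_le hM.le (by filter_upwards [huM] with t ht hm; exact ht hm.1)
    exact le_trans (csInf_le (bddBelow_supNorm_image _ 0 Tm) ⟨u, hmem, rfl⟩) h1
  have hge : M ≤ Mmin U B y₀ Tm := by
    by_contra hlt
    push_neg at hlt
    have hne : ((fun v : ℝ → H => supNorm v 0 Tm) '' VTset U B y₀ Tm).Nonempty :=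
      (VTset_nonempty hEC y₀ hT).image _
    obtain ⟨m, ⟨v, hv, rfl⟩, hmlt⟩ := exists_lt_of_csInf_lt hne hlt
    have hc0 : 0 ≤ supNorm v 0 Tm := supNorm_nonneg _ _ _
    have hvc := ae_le_supNorm hv.1
    set w := (Ioo (0:ℝ) Tm).indicator v with hw
    have hweq : ∀ t ∈ Ioo (0:ℝ) Tm, w t = v t := fun t ht => indicator_of_mem ht v
    have hwstate : stateT U B Tm 0 w y₀ = 0 := by
      rw [← hv.2]; unfold stateT; congr 1
      exact setIntegral_congr_fun measurableSet_Ioo fun s hs => by rw [hweq s hs]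
    have hwU : w ∈ UMset U B y₀ M := by
      refine ⟨⟨hv.1.1.indicator measurableSet_Ioo, supNorm v 0 Tm, ?_⟩, ?_, Tm, hT, hwstate⟩
      · filter_upwards [hvc] with t ht _
        by_cases h : t ∈ Ioo 0 Tm
        · rw [hweq t h]; exact ht h
        · rw [hw, indicator_of_notMem h]; simpa using hc0
      · filter_upwards [hvc] with t ht _
        by_cases h : t ∈ Ioo 0 Tm
        · rw [hweq t h]; exact (ht h).trans hmlt.le
        · rw [hw, indicator_of_notMem h]; simpa using hM.le
    have hbang := hBB y₀ hy₀ M hM w hwU hwstate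
    have hnm : ∀ᵐ t : ℝ ∂volume, t ∉ Ioo (0:ℝ) Tm := by
      filter_upwards [hbang, hvc] with t h1 h2 hmem
      have hM1 : M ≤ supNorm v 0 Tm := by
        rw [← h1 hmem, hweq t hmem]; exact h2 hmem
      exact absurd (hM1.trans_lt hmlt) (lt_irrefl M)
    have hvol : volume (Ioo (0:ℝ) Tm) = 0 := by
      rw [ae_iff] at hnm
      have hset : {a : ℝ | ¬ a ∉ Ioo (0:ℝ) Tm} = Ioo (0:ℝ) Tm := by ext a; simp
      rwa [hset] at hnm
    rw [Real.volume_Ioo] at hvol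
    simp only [ENNReal.ofReal_eq_zero] at hvol
    linarith
  linarith

set_option maxHeartbeats 1000000 in
lemma Mmin_strict_anti (hU : IsUnitaryGroup U) (hB : IsOrthProj B) (hEC : EC U B)
    {y₀ : H} (hy₀ : y₀ ≠ 0) {T₁ T₂ : ℝ} (h1 : 0 < T₁) (h12 : T₁ < T₂) :
    Mmin U B y₀ T₂ < Mmin U B y₀ T₁ := by
  have hBpos : (0:ℝ) < ‖B‖ := norm_pos_iff.2 hB.1
  have hy₀n : (0:ℝ) < ‖y₀‖ := norm_pos_iff.2 hy₀
  have hδpos : 0 < T₂ - T₁ := sub_pos.2 h12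
  obtain ⟨C, hC, hECδ⟩ := hEC (T₂ - T₁) hδpos
  have hM₁pos : 0 < Mmin U B y₀ T₁ := Mmin_pos hU hB hEC hy₀ h1
  set M₁ := Mmin U B y₀ T₁ with hM₁
  set a := min (1/2 : ℝ) (M₁ / (2 * C * ‖y₀‖ + 1)) with ha
  have hapos : 0 < a := lt_min (by norm_num) (div_pos hM₁pos (by positivity))
  have ha1 : a ≤ 1/2 := min_le_left _ _
  set l := 1 - a with hl
  have hl0 : 0 < l := by rw [hl]; linarith
  have hl1 : l < 1 := by rw [hl]; linarith
  set ε := M₁ * a / (2 * l) with hε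
  have hεpos : 0 < ε := by positivity
  have hne : ((fun v : ℝ → H => supNorm v 0 T₁) '' VTset U B y₀ T₁).Nonempty :=
    (VTset_nonempty hEC y₀ h1).image _
  have hsInflt : sInf ((fun v : ℝ → H => supNorm v 0 T₁) '' VTset U B y₀ T₁) < M₁ + ε := by
    have : Mmin U B y₀ T₁ < M₁ + ε := by rw [← hM₁]; linarith
    exact this
  obtain ⟨m, ⟨v, hv, rfl⟩, hmlt⟩ := exists_lt_of_csInf_lt hne hsInflt
  have hvstate := hv.2
  unfold stateT at hvstate
  have hv_aesm := hv.1.1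
  have hv_ae := ae_le_supNorm hv.1
  set z₁ := (1 - l) • U T₁ y₀ with hz₁
  obtain ⟨u₂, hu₂_aesm, hu₂_bd, hu₂state⟩ := hECδ z₁ 0
  set c₂ := C * ‖(0 : H) - U (T₂ - T₁) z₁‖ with hc₂
  have hc₂0 : 0 ≤ c₂ := by rw [hc₂]; positivity
  have hc₂val : c₂ = C * (a * ‖y₀‖) := by
    rw [hc₂, zero_sub, norm_neg, hU.norm_apply, hz₁, norm_smul, hU.norm_apply]
    congr 2
    rw [hl]
    simp [abs_of_nonneg hapos.le]
  have hc₂lt : c₂ < M₁ := by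
    rw [hc₂val]
    have hD : (0:ℝ) < 2 * C * ‖y₀‖ + 1 := by positivity
    have hq : M₁ / (2 * C * ‖y₀‖ + 1) * (2 * C * ‖y₀‖ + 1) = M₁ :=
      div_mul_cancel₀ _ (ne_of_gt hD)
    have haq : a ≤ M₁ / (2 * C * ‖y₀‖ + 1) := min_le_right _ _
    nlinarith [div_pos hM₁pos hD, mul_pos hC hy₀n, mul_pos hapos hy₀n]
  have hlM : l * (M₁ + ε) < M₁ := by
    have hlne : l ≠ 0 := ne_of_gt hl0
    have hcalc : l * (M₁ + ε) = M₁ - M₁ * a / 2 := by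
      rw [hε, mul_add, mul_div_assoc', mul_comm l (M₁ * a), mul_div_mul_right _ _ hlne, hl]; ring
    rw [hcalc]
    nlinarith
  set K := max (l * (M₁ + ε)) c₂ with hK
  have hK0 : 0 ≤ K := le_trans hc₂0 (le_max_right _ _)
  have hKlt : K < M₁ := max_lt hlM hc₂lt
  set w := (Ioo (0:ℝ) T₁).indicator (fun s => l • v s)
    + (Ioo T₁ T₂).indicator (fun s => u₂ (s - T₁)) with hwdef
  have hu₂shift_aesm : AEStronglyMeasurable (fun s : ℝ => u₂ (s - T₁)) (volume : Measure ℝ) :=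
    hu₂_aesm.comp_quasiMeasurePreserving
      (measurePreserving_sub_right (volume : Measure ℝ) T₁).quasiMeasurePreserving
  have hw_aesm : AEStronglyMeasurable w (volume : Measure ℝ) :=
    ((hv_aesm.const_smul l).indicator measurableSet_Ioo).add
      (hu₂shift_aesm.indicator measurableSet_Ioo)
  have hw1 : ∀ t ∈ Ioo (0:ℝ) T₁, w t = l • v t := by
    intro t ht
    have h2 : t ∉ Ioo T₁ T₂ := fun hc => absurd hc.1 (not_lt.2 ht.2.le)
    rw [hwdef]
    simp only [Pi.add_apply, indicator_of_mem ht, indicator_of_notMem h2, add_zero]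
  have hw2 : ∀ t ∈ Ioo T₁ T₂, w t = u₂ (t - T₁) := by
    intro t ht
    have h2 : t ∉ Ioo (0:ℝ) T₁ := fun hc => absurd ht.1 (not_lt.2 hc.2.le)
    rw [hwdef]
    simp only [Pi.add_apply, indicator_of_mem ht, indicator_of_notMem h2, zero_add]
  have hwT₁ : w T₁ = 0 := by
    rw [hwdef]
    simp only [Pi.add_apply,
      indicator_of_notMem (fun hc : T₁ ∈ Ioo (0:ℝ) T₁ => lt_irrefl T₁ hc.2),
      indicator_of_notMem (fun hc : T₁ ∈ Ioo T₁ T₂ => lt_irrefl T₁ hc.1), add_zero]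
  have hu₂_bd' : ∀ᵐ t : ℝ ∂volume, (t - T₁) ∈ Ioo 0 (T₂ - T₁) → ‖u₂ (t - T₁)‖ ≤ c₂ :=
    ae_comp_sub hu₂_bd T₁
  have hw_bd : ∀ᵐ t : ℝ ∂volume, t ∈ Ioo 0 T₂ → ‖w t‖ ≤ K := by
    filter_upwards [hv_ae, hu₂_bd'] with t hb1 hb2 hmem
    rcases lt_trichotomy t T₁ with h | h | h
    · have ht1 : t ∈ Ioo (0:ℝ) T₁ := ⟨hmem.1, h⟩
      rw [hw1 t ht1, norm_smul, Real.norm_eq_abs, abs_of_pos hl0]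
      have hvb := hb1 ht1
      have hlb : l * ‖v t‖ ≤ l * (M₁ + ε) := by nlinarith
      exact hlb.trans (le_max_left _ _)
    · rw [h, hwT₁]; simpa using hK0
    · have ht2 : t ∈ Ioo T₁ T₂ := ⟨h, hmem.2⟩
      rw [hw2 t ht2]
      have hmem' : t - T₁ ∈ Ioo (0:ℝ) (T₂ - T₁) :=
        ⟨sub_pos.2 h, by linarith [ht2.2]⟩
      exact (hb2 hmem').trans (le_max_right _ _)
  have hw_int : IntegrableOn (fun s => U (T₂ - s) (B (w s))) (Ioo 0 T₂) volume :=
    integrableOn_integrand hU hw_aesm hw_bd T₂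
  have hstate1 : stateT U B T₁ 0 w y₀ = z₁ := by
    unfold stateT
    have hcongr : ∫ s in Ioo 0 T₁, U (T₁ - s) (B (w s))
        = l • ∫ s in Ioo 0 T₁, U (T₁ - s) (B (v s)) := by
      rw [← integral_smul]
      refine setIntegral_congr_fun measurableSet_Ioo fun s hs => ?_
      rw [hw1 s hs]
      simp
    have hv_int_eq : ∫ s in Ioo 0 T₁, U (T₁ - s) (B (v s)) = -(U T₁ y₀) :=
      eq_neg_of_add_eq_zero_right hvstate
    rw [hcongr, hv_int_eq, hz₁]
    module
  have hsplit := state_split hU hw_aesm h1 h12 hw_int y₀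
  have hshift : ∫ s in Ioo T₁ T₂, U (T₂ - s) (B (w s))
      = ∫ r in Ioo 0 (T₂ - T₁), U ((T₂ - T₁) - r) (B (u₂ r)) := by
    have he : ∫ s in Ioo T₁ T₂, U (T₂ - s) (B (w s))
        = ∫ s in Ioo T₁ T₂, (fun r => U ((T₂ - T₁) - r) (B (u₂ r))) (s - T₁) := by
      refine setIntegral_congr_fun measurableSet_Ioo fun s hs => ?_
      rw [hw2 s hs]
      show U (T₂ - s) (B (u₂ (s - T₁))) = U (T₂ - T₁ - (s - T₁)) (B (u₂ (s - T₁)))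
      have harg : T₂ - T₁ - (s - T₁) = T₂ - s := by ring
      rw [harg]
    exact he.trans (integral_shift' (fun r => U ((T₂ - T₁) - r) (B (u₂ r)))
      (τ := T₁) (b := T₂) (δ := T₂ - T₁) (by ring))
  have hu₂eq : ∫ r in Ioo 0 (T₂ - T₁), U ((T₂ - T₁) - r) (B (u₂ r)) = -(U (T₂ - T₁) z₁) := by
    refine eq_neg_of_add_eq_zero_right ?_
    have := hu₂state
    unfold stateT at this
    exact this
  have hwstate : stateT U B T₂ 0 w y₀ = 0 := by
    rw [hsplit, hstate1, hshift, hu₂eq]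
    simp
  have hwV : w ∈ VTset U B y₀ T₂ := ⟨⟨hw_aesm, K, hw_bd⟩, hwstate⟩
  have hsup : supNorm w 0 T₂ ≤ K := supNorm_le hK0 hw_bd
  have hfin : Mmin U B y₀ T₂ ≤ K :=
    le_trans (csInf_le (bddBelow_supNorm_image _ 0 T₂) ⟨w, hwV, rfl⟩) hsup
  exact lt_of_le_of_lt hfin hKlt

end Helpers

theorem minimal_time_minimal_norm_inverse
    (U : ℝ → H →L[ℂ] H) (B : H →L[ℂ] H) (hU : IsUnitaryGroup U) (hB : IsOrthProj B)
    (hEC : EC U B) (hECrev : EC (fun t => U (-t)) B)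
    (hBB : BB U B) (hBBrev : BB (fun t => U (-t)) B)
    (hET : ET U B) (hETrev : ET (fun t => U (-t)) B)
    (y₀ : H) (hy₀ : y₀ ≠ 0) :
    (∀ T : ℝ, 0 < T → Tmin U B y₀ (Mmin U B y₀ T) = T) ∧
    (∀ M : ℝ, 0 < M → Mmin U B y₀ (Tmin U B y₀ M) = M) ∧
    InvOn (Mmin U B y₀) (Tmin U B y₀) (Ioi (0 : ℝ)) (Ioi (0 : ℝ)) := by
  have part2 : ∀ M : ℝ, 0 < M → Mmin U B y₀ (Tmin U B y₀ M) = M := fun M hM =>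
    Mmin_Tmin_eq hU hB hEC hBB hET hy₀ hM
  have part1 : ∀ T : ℝ, 0 < T → Tmin U B y₀ (Mmin U B y₀ T) = T := by
    intro T hT
    have hMT := Mmin_pos hU hB hEC hy₀ hT
    have h2 := part2 _ hMT
    have hTm := Tmin_pos hU hB hET hy₀ hMT
    rcases lt_trichotomy (Tmin U B y₀ (Mmin U B y₀ T)) T with h | h | h
    · have hs := Mmin_strict_anti hU hB hEC hy₀ hTm h
      rw [h2] at hs
      exact absurd hs (lt_irrefl _)
    · exact h
    · have hs := Mmin_strict_anti hU hB hEC hy₀ hT h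
      rw [h2] at hs
      exact absurd hs (lt_irrefl _)
  exact ⟨part1, part2, fun M hM => part2 M hM, fun T hT => part1 T hT⟩
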